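/- arXiv:1503.03526 — 3 statements merged into one kernel-verified Lean document; each statement's English description precedes it below -/
import Mathlib

section
/- Let (V, β, γ) be an Sp(2n,ℝ)-Higgs bundle on a compact Riemann surface Σ of genus g ≥ 2, i.e. V is a rank-n holomorphic bundle, β ∈ H⁰(Sym²(V)⊗K), γ ∈ H⁰(Sym²(V*)⊗K). If deg(V) > n(g-1) then γ = 0 and the associated SL(2n,ℂ)-Higgs bundle (V ⊕ V*, [[0,β],[γ,0]]) has the φ-invariant subbundle V of positive degree, hence is unstable. In particular the Toledo invariant τ = deg(V) of a polystable Sp(2n,ℝ)-Higgs bundle satisfies |τ| ≤ n(g-1). -/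
/-- the Milnor–Wood/Toledo bound for `Sp(2n,ℝ)`-Higgs bundles
`(V, β, γ)` on a compact Riemann surface of genus `g ≥ 2`, with `d = deg V` the
Toledo invariant.  The section spaces `H⁰(Sym²V ⊗ K)` and `H⁰(Sym²V* ⊗ K)` are
abstract additive groups `SecB`, `SecG`; a nonzero section forces the corresponding
degrees `±(n+1)d + n(n+1)(g-1)` of `Sym²V ⊗ K` resp. `Sym²V* ⊗ K` to be nonnegative.
`Sub` indexes the φ-invariant-candidate subbundles of `E = V ⊕ V*`, with their degree
`degS` and invariance predicate `inv`; `V` (of degree `d`) is φ-invariant when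
`γ = 0`, and `V*` (of degree `-d`) when `β = 0`; semistability means every
φ-invariant subbundle has nonpositive degree.  Conclusion: if `d > n(g-1)` then
`γ = 0`, so `V ⊂ V ⊕ V*` is a φ-invariant subbundle of positive degree and `(E,φ)`
is unstable; and consequently semistability forces `|τ| = |d| ≤ n(g-1)`. -/
theorem toledo_invariant_bound
    (n g : ℕ) (hg : 2 ≤ g) (d : ℤ)
    (SecB SecG : Type*) [AddCommGroup SecB] [AddCommGroup SecG]
    (β : SecB) (γ : SecG)
    (hdegG : γ ≠ 0 → 0 ≤ -((n : ℤ) + 1) * d + (n : ℤ) * ((n : ℤ) + 1) * ((g : ℤ) - 1))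
    (hdegB : β ≠ 0 → 0 ≤ ((n : ℤ) + 1) * d + (n : ℤ) * ((n : ℤ) + 1) * ((g : ℤ) - 1))
    (Sub : Type*) (degS : Sub → ℤ) (inv : Sub → Prop)
    (VE VdualE : Sub)
    (hVdeg : degS VE = d) (hVdualdeg : degS VdualE = -d)
    (hVinv : γ = 0 → inv VE)
    (hVdualinv : β = 0 → inv VdualE)
    (semistable : Prop)
    (hsemi : semistable ↔ ∀ F : Sub, inv F → degS F ≤ 0) :
    ((n : ℤ) * ((g : ℤ) - 1) < d → γ = 0 ∧ inv VE ∧ 0 < degS VE ∧ ¬semistable) ∧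
    (semistable → |d| ≤ (n : ℤ) * ((g : ℤ) - 1)) := by
  have hGzero : (n : ℤ) * ((g : ℤ) - 1) < d → γ = 0 := by
    intro hd
    by_contra hγ
    have := hdegG hγ
    nlinarith [Int.natCast_nonneg n]
  constructor
  · intro hd
    have hγ := hGzero hd
    have hinv := hVinv hγ
    have hpos : 0 < degS VE := by
      rw [hVdeg]
      have hn : (0:ℤ) ≤ n := Int.natCast_nonneg n
      have hg' : (1:ℤ) ≤ (g:ℤ) := by exact_mod_cast Nat.one_le_of_lt hg
      nlinarith
    exact ⟨hγ, hinv, hpos, fun hs => absurd ((hsemi.mp hs) VE hinv) (by omega)⟩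
  · intro hs
    rw [abs_le]
    constructor
    · by_contra h
      push_neg at h
      have hβ : β = 0 := by
        by_contra hβ
        have := hdegB hβ
        nlinarith [Int.natCast_nonneg n]
      have := (hsemi.mp hs) VdualE (hVdualinv hβ)
      rw [hVdualdeg] at this
      have hg' : (2:ℤ) ≤ (g:ℤ) := by exact_mod_cast hg
      nlinarith [Int.natCast_nonneg n]
    · by_contra h
      push_neg at h
      have := (hsemi.mp hs) VE (hVinv (hGzero h))
      rw [hVdeg] at this
      have hg' : (2:ℤ) ≤ (g:ℤ) := by exact_mod_cast hg
      nlinarith [Int.natCast_nonneg n]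
end

section
/- Let (E, ∂̄_E, φ) be a Higgs bundle with metric h solving the Hitchin equations, and let g be a holomorphic gauge transformation (∂̄_E g = 0) such that g⁻¹φg = ζφ for some ζ ∈ U(1). Then g is unitary with respect to h, i.e. h·g*ʰ·g = h, where g*ʰ is the h-adjoint of g. In particular, if g is diagonalizable, h splits as an orthogonal direct sum along the eigenbundles of g. -/
/-- a holomorphic gauge transformation conjugating the Higgs field into a
unimodular multiple of itself is unitary for the harmonic metric.  `Dbar` is the set
of holomorphic structures, `solves D' φ' h'` is the predicate "`h'` solves the Hitchin
equations for the Higgs bundle `(D', φ')`".  The metric `h` is a positive-definite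
Hermitian form; `g` is a gauge transformation with `∂̄ g = 0` (i.e. `g` fixes `D`,
hypothesis `hhol`) and `g⁻¹ φ g = ζ φ` with `ζ ∈ U(1)` (hypothesis `hconj`).  Gauge
transformations act on solutions by `(∂̄, φ, h) ↦ (g⁻¹∂̄g, g⁻¹φg, h(g·, g·))`
(hypothesis `hgauge`), the `U(1)`-action `φ ↦ ζφ` preserves solutions (`hU1`), and
the solution metric is unique (`huniq`).  Conclusion: `h(gx, gy) = h(x,y)`, i.e.
`h g*ʰ g = h`; in particular eigenvectors of `g` for distinct eigenvalues are
`h`-orthogonal, so if `g` is diagonalizable then `h` splits as an orthogonal direct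
sum along the eigenbundles of `g`. -/
theorem holomorphic_gauge_unitary
    (V : Type*) [AddCommGroup V] [Module ℂ V]
    (Dbar : Type*) (D : Dbar)
    (φ : V →ₗ[ℂ] V) (g : V ≃ₗ[ℂ] V) (ζ : ℂ) (hζ : ‖ζ‖ = 1)
    (h : V → V → ℂ)
    (hadd₁ : ∀ x y z, h (x + y) z = h x z + h y z)
    (hadd₂ : ∀ x y z, h x (y + z) = h x y + h x z)
    (hsmul₁ : ∀ (c : ℂ) (x y : V), h (c • x) y = (starRingEnd ℂ c) * h x y)
    (hsmul₂ : ∀ (c : ℂ) (x y : V), h x (c • y) = c * h x y)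
    (hherm : ∀ x y, h x y = starRingEnd ℂ (h y x))
    (hpos : ∀ x, x ≠ 0 → 0 < (h x x).re)
    (solves : Dbar → (V →ₗ[ℂ] V) → (V → V → ℂ) → Prop)
    (hsol : solves D φ h)
    (huniq : ∀ h₁ h₂, solves D φ h₁ → solves D φ h₂ → h₁ = h₂)
    (actD : (V ≃ₗ[ℂ] V) → Dbar → Dbar)
    (hgauge : ∀ h' : V → V → ℂ, solves D φ h' →
        solves (actD g D) ((g.symm.toLinearMap ∘ₗ φ) ∘ₗ g.toLinearMap)
          (fun x y => h' (g x) (g y)))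
    (hU1 : ∀ (D' : Dbar) (h' : V → V → ℂ) (ζ' : ℂ), ‖ζ'‖ = 1 →
        (solves D' (ζ' • φ) h' ↔ solves D' φ h'))
    (hhol : actD g D = D)
    (hconj : (g.symm.toLinearMap ∘ₗ φ) ∘ₗ g.toLinearMap = ζ • φ) :
    (∀ x y, h (g x) (g y) = h x y) ∧
    (∀ μ ν : ℂ, μ ≠ ν → ∀ x y : V, g x = μ • x → g y = ν • y → h x y = 0) := by
  have key : ∀ x y, h (g x) (g y) = h x y := by
    have h1 := hgauge h hsol
    rw [hhol, hconj] at h1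
    rw [hU1 D _ ζ hζ] at h1
    have := huniq _ _ h1 hsol
    intro x y
    exact congrFun (congrFun this x) y
  refine ⟨key, ?_⟩
  intro μ ν hμν x y hx hy
  by_cases hx0 : x = 0
  · have := hsmul₁ 0 0 y
    simpa [hx0] using this
  by_cases hy0 : y = 0
  · have := hsmul₂ 0 x 0
    simpa [hy0] using this
  -- |μ| = 1
  have hxx : (starRingEnd ℂ μ) * μ * h x x = h x x := by
    have := key x x; rw [hx, hsmul₁, hsmul₂] at this; linear_combination this
  have hyy : (starRingEnd ℂ ν) * ν * h y y = h y y := by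
    have := key y y; rw [hy, hsmul₁, hsmul₂] at this; linear_combination this
  have hxxne : h x x ≠ 0 := by
    intro hc; have := hpos x hx0; rw [hc] at this; simp at this
  have hyyne : h y y ≠ 0 := by
    intro hc; have := hpos y hy0; rw [hc] at this; simp at this
  have hmu1 : (starRingEnd ℂ μ) * μ = 1 := by
    have h2 : ((starRingEnd ℂ μ) * μ - 1) * h x x = 0 := by linear_combination hxx
    rcases mul_eq_zero.mp h2 with h3 | h3
    · exact sub_eq_zero.mp h3
    · exact absurd h3 hxxne
  have hnu1 : (starRingEnd ℂ ν) * ν = 1 := by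
    have h2 : ((starRingEnd ℂ ν) * ν - 1) * h y y = 0 := by linear_combination hyy
    rcases mul_eq_zero.mp h2 with h3 | h3
    · exact sub_eq_zero.mp h3
    · exact absurd h3 hyyne
  have hxy : (starRingEnd ℂ μ) * ν * h x y = h x y := by
    have := key x y; rw [hx, hy, hsmul₁, hsmul₂] at this; linear_combination this
  by_contra hne
  have hc : (starRingEnd ℂ μ) * ν = 1 := by
    have h2 : ((starRingEnd ℂ μ) * ν - 1) * h x y = 0 := by linear_combination hxy
    rcases mul_eq_zero.mp h2 with h3 | h3
    · exact sub_eq_zero.mp h3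
    · exact absurd h3 hne
  apply hμν
  have hcne : starRingEnd ℂ μ ≠ 0 := by
    intro hc'; rw [hc'] at hmu1; simp at hmu1
  exact mul_left_cancel₀ hcne (hmu1.trans hc.symm)
end

section
/- Let f: Σ → G/T be a cyclic surface, i.e. the pullbacks satisfy f*ω̂_j = 0 for j ≠ ±1 in the ℤ/(m+1)-grading, f*ω̂_{-1} is a (1,0)-form, and f*(Θ(ω̂_{-1})) = -f*ω̂_1. Then the pulled-back Higgs field Φ = f*ω̂_{-1} is holomorphic with respect to (f*∇ᶜ)^{0,1} — i.e. (d^{f*∇ᶜ})^{0,1}Φ = 0 — because the flatness equation d^{∇ᶜ}ω̂_{-1} + Σ_j [ω̂_j, ω̂_{-1-j}] = 0 pulls back to d^{f*∇ᶜ}Φ = 0 and Φ is type (1,0). -/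
/-- holomorphicity of the Higgs field pulled back by a cyclic surface
`f : Σ → G/T`.  Here `O1` and `O2` are the (complex modules of) `f*[𝔤]`-valued 1- and
2-forms on the Riemann surface `Σ`, with the submodules `O10` and `O01` of (1,0)- and
(0,1)-forms; on a surface the wedge-bracket `br` of two (1,0)-forms or of two
(0,1)-forms vanishes.  `d` is the covariant exterior differential `d^{f*∇ᶜ}`, `Θ` the
(parallel, fiberwise) Cartan involution extended to forms (it exchanges types (1,0)
and (0,1)), and `ω j = f*ω̂_j` are the pullbacks of the ℤ/(m+1)-graded pieces of the
Maurer–Cartan form (`m ≥ 2` is the height of the highest root, as `rk G ≥ 2`).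
The cyclic-surface conditions are `f*ω̂_j = 0` for `j ≠ ±1`, `Φ := f*ω̂_{-1}` of type
(1,0), and `f*(Θ ω̂_{-1}) = - f*ω̂_1`.  The pulled-back flatness equation in degree
`-1` is `d Φ + Σ_j [ω̂_j ∧ ω̂_{-1-j}] = 0`.  Conclusion: `d^{f*∇ᶜ} Φ = 0`; in
particular `(d^{f*∇ᶜ})^{0,1} Φ = 0`, i.e. `Φ` is holomorphic. -/
theorem cyclic_surface_higgs_field_holomorphic
    (m : ℕ) (hm : 2 ≤ m)
    (O1 O2 : Type*) [AddCommGroup O1] [Module ℂ O1] [AddCommGroup O2] [Module ℂ O2]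
    (O10 O01 : Submodule ℂ O1)
    (d : O1 →ₗ[ℂ] O2)
    (br : O1 →ₗ[ℂ] O1 →ₗ[ℂ] O2)
    (hbr10 : ∀ α ∈ O10, ∀ β ∈ O10, br α β = 0)
    (hbr01 : ∀ α ∈ O01, ∀ β ∈ O01, br α β = 0)
    (Θ : O1 →+ O1)
    (hΘ : ∀ α ∈ O10, Θ α ∈ O01)
    (ω : ZMod (m + 1) → O1)
    (hcyc : ∀ j : ZMod (m + 1), j ≠ 1 → j ≠ -1 → ω j = 0)
    (h10 : ω (-1) ∈ O10)
    (hΘrel : Θ (ω (-1)) = -(ω 1))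
    (hflat : d (ω (-1)) + ∑ j : ZMod (m + 1), br (ω j) (ω (-1 - j)) = 0) :
    d (ω (-1)) = 0 := by
  haveI : Fact (1 < m + 1) := ⟨by omega⟩
  have h1ne0 : (1 : ZMod (m + 1)) ≠ 0 := one_ne_zero
  have hω1 : ω 1 ∈ O01 := by
    have h := hΘ _ h10
    rw [hΘrel] at h
    exact (neg_mem_iff).mp h
  have hsum : ∑ j : ZMod (m + 1), br (ω j) (ω (-1 - j)) = 0 := by
    apply Finset.sum_eq_zero
    intro j _
    by_cases hj1 : j = 1
    · subst hj1
      by_cases h2 : (-1 - 1 : ZMod (m + 1)) = 1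
      · rw [h2]; exact hbr01 _ hω1 _ hω1
      · have h2' : (-1 - 1 : ZMod (m + 1)) ≠ -1 := by
          intro h; apply h1ne0; linear_combination -h
        rw [hcyc _ h2 h2', map_zero]
    · by_cases hjm1 : j = -1
      · subst hjm1
        have h0 : (-1 - -1 : ZMod (m + 1)) = 0 := by ring
        have hne : (0 : ZMod (m + 1)) ≠ -1 := by
          intro h; exact h1ne0 (by linear_combination h)
        have hω0 : ω 0 = 0 := hcyc 0 (Ne.symm h1ne0) hne
        rw [h0, hω0, map_zero]
      · rw [hcyc _ hj1 hjm1, map_zero, LinearMap.zero_apply]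
  rw [hsum, add_zero] at hflat
  exact hflat
end
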